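/- Let f ∈ ℝ[X_1,...,X_n] be non-constant of degree 2d with f_{2d,i} > 0 for all i and |α| < 2d for every α ∈ Δ. Let t = |Δ|. Then f − r_dmt is a sum of squares, where r_dmt = f_0 − Σ_{α∈Δ}(2d−|α|)·[(f_α/(2d))^{2d}·t^{|α|}·α^α·Π_i f_{2d,i}^{−α_i}]^{1/(2d−|α|)}. -/

import Mathlib

open Finset MvPolynomial

section Toolbox

variable {R : Type*} [CommRing R]



theorem sos_sq (x : R) : IsSumSq (x ^ 2) := by
  rw [pow_two, ← add_zero (x*x)]; exact IsSumSq.sq_add _ IsSumSq.zero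

theorem sos_sum {ι : Type*} (s : Finset ι) (f : ι → R) (h : ∀ i ∈ s, IsSumSq (f i)) :
    IsSumSq (∑ i ∈ s, f i) := by
  induction s using Finset.cons_induction with
  | empty => simpa using IsSumSq.zero
  | cons i s his ih =>
    rw [Finset.sum_cons]
    exact (h i (Finset.mem_cons_self _ _)).add (ih fun j hj => h j (Finset.mem_cons.2 (Or.inr hj)))

theorem sos_mul_sq {z : R} (hz : IsSumSq z) (x : R) : IsSumSq (x ^ 2 * z) := by
  induction hz with
  | zero => simpa using IsSumSq.zero
  | @sq_add a S pS ih =>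
    have : x ^ 2 * (a * a + S) = (x*a) * (x*a) + x ^ 2 * S := by ring
    rw [this]; exact IsSumSq.sq_add _ ih

theorem sos_nat_mul {z : R} (hz : IsSumSq z) (m : ℕ) : IsSumSq ((m : R) * z) := by
  induction m with
  | zero => simpa using IsSumSq.zero
  | succ k ih =>
    have : ((k+1 : ℕ) : R) * z = z + (k : R) * z := by push_cast; ring
    rw [this]; exact hz.add ih

theorem sq1 (j : ℕ) (x y : R) : IsSumSq ((x^2 - y^2) * ((x^2)^j - (y^2)^j)) := by
  induction j with
  | zero => simpa using IsSumSq.zero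
  | succ k ih =>
    have h : (x^2 - y^2) * ((x^2)^(k+1) - (y^2)^(k+1))
        = x^2 * ((x^2 - y^2) * ((x^2)^k - (y^2)^k)) + (y^k*(x^2-y^2)) * (y^k*(x^2-y^2)) := by
      ring
    rw [h]
    exact (sos_mul_sq ih x).add (by rw [← pow_two]; exact sos_sq _)



theorem sos_smul [Algebra ℝ R] {z : R} (hz : IsSumSq z) {c : ℝ} (hc : 0 ≤ c) :
    IsSumSq (algebraMap ℝ R c * z) := by
  induction hz with
  | zero => simpa using IsSumSq.zero
  | @sq_add a S pS ih =>
    have h : algebraMap ℝ R c * (a * a + S)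
        = (algebraMap ℝ R (Real.sqrt c) * a) * (algebraMap ℝ R (Real.sqrt c) * a)
          + algebraMap ℝ R c * S := by
      rw [mul_add]
      congr 1
      rw [mul_mul_mul_comm, ← map_mul, Real.mul_self_sqrt hc]
    rw [h]; exact IsSumSq.sq_add _ ih

theorem amgm_core {ι : Type*} [Algebra ℝ R] [DecidableEq ι] (s : Finset ι) (x : ι → R) :
    IsSumSq ((∑ i ∈ s, (x i ^ 2) ^ s.card) - (s.card : R) * ∏ i ∈ s, x i ^ 2) := by
  induction s using Finset.strongInduction with
  | _ s ih =>
    rcases Nat.lt_or_ge s.card 2 with h2 | h2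
    · interval_cases h : s.card
      · rw [Finset.card_eq_zero] at h
        subst h; simpa using IsSumSq.zero
      · obtain ⟨a, rfl⟩ := Finset.card_eq_one.1 h
        simpa using IsSumSq.zero
    · obtain ⟨k, hk⟩ : ∃ k, s.card = k + 2 := ⟨s.card - 2, by omega⟩
      rw [hk]
      set u : ι → R := fun i => x i ^ 2 with hu
      set s1 : R := ∑ i ∈ s, u i with hs1
      set sk1 : R := ∑ i ∈ s, (u i)^(k+1) with hsk1
      set sk2 : R := ∑ i ∈ s, (u i)^(k+2) with hsk2
      set P : R := ∏ i ∈ s, u i with hP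
      set S1 : R := ∑ i ∈ s, ∑ j ∈ s, ((u i)^(k+1) - (u j)^(k+1)) * (u i - u j) with hS1
      set S2 : R := ∑ j ∈ s, u j * ((∑ i ∈ s.erase j, (u i)^(k+1))
          - (((s.erase j).card : ℕ) : R) * ∏ i ∈ s.erase j, u i) with hS2
      have hS1sos : IsSumSq S1 := by
        apply sos_sum; intro i _; apply sos_sum; intro j _
        rw [mul_comm]
        exact sq1 (k+1) (x i) (x j)
      have hS2sos : IsSumSq S2 := by
        apply sos_sum; intro j hj
        have hsub : s.erase j ⊂ s := Finset.erase_ssubset hj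
        have h3 := ih (s.erase j) hsub
        have hcard : (s.erase j).card = k + 1 := by
          rw [Finset.card_erase_of_mem hj, hk]
          omega
        rw [hcard] at h3
        rw [hcard]
        exact sos_mul_sq h3 (x j)
      have key : S1 + (S2 + S2) = ((2*(k+1) : ℕ) : R) * (sk2 - ((k+2 : ℕ) : R) * P) := by
        have inner : ∀ i ∈ s, ∑ j ∈ s, ((u i)^(k+1) - (u j)^(k+1)) * (u i - u j)
            = ((k+2 : ℕ) : R) * (u i)^(k+2) - (u i)^(k+1) * s1 - (u i) * sk1 + sk2 := by
          intro i hi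
          have expand : ∀ j, ((u i)^(k+1) - (u j)^(k+1)) * (u i - u j)
              = (u i)^(k+2) - (u i)^(k+1)*(u j) - (u i)*((u j)^(k+1)) + (u j)^(k+2) := by
            intro j; ring
          rw [Finset.sum_congr rfl (fun j _ => expand j)]
          rw [Finset.sum_add_distrib, Finset.sum_sub_distrib, Finset.sum_sub_distrib,
            Finset.sum_const, ← Finset.mul_sum, ← Finset.mul_sum, hk, nsmul_eq_mul,
            ← hs1, ← hsk1, ← hsk2]
          all_goals push_cast
          all_goals ring
        have hS1' : S1 = ((k+2 : ℕ) : R) * sk2 - sk1 * s1 - s1 * sk1 + ((k+2:ℕ) : R) * sk2 := by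
          rw [hS1, Finset.sum_congr rfl inner, Finset.sum_add_distrib, Finset.sum_sub_distrib,
            Finset.sum_sub_distrib, ← Finset.mul_sum, ← hsk2, Finset.sum_const, hk,
            nsmul_eq_mul, ← Finset.sum_mul, ← hsk1, ← Finset.sum_mul, ← hs1]
          all_goals push_cast
          all_goals ring
        have inner2 : ∀ j ∈ s, u j * ((∑ i ∈ s.erase j, (u i)^(k+1))
            - (((s.erase j).card : ℕ) : R) * ∏ i ∈ s.erase j, u i)
            = u j * sk1 - (u j)^(k+2) - ((k+1 : ℕ) : R) * P := by
          intro j hj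
          have hp : u j * ∏ i ∈ s.erase j, u i = P := Finset.mul_prod_erase s u hj
          rw [Finset.sum_erase_eq_sub hj, Finset.card_erase_of_mem hj, hk, ← hsk1, ← hp]
          have hcast : ((k + 2 - 1 : ℕ) : R) = ((k+1 : ℕ) : R) := by norm_num
          rw [hcast]
          ring
        have hS2' : S2 = s1 * sk1 - sk2 - ((k+1 : ℕ) : R) * (((k+2:ℕ) : R) * P) := by
          rw [hS2, Finset.sum_congr rfl inner2, Finset.sum_sub_distrib, Finset.sum_sub_distrib,
            ← Finset.sum_mul, ← hs1, ← hsk2, Finset.sum_const, hk, nsmul_eq_mul]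
          all_goals push_cast
          all_goals ring
        rw [hS1', hS2']
        push_cast
        ring
      have hfin : IsSumSq (S1 + (S2 + S2)) := hS1sos.add (hS2sos.add hS2sos)
      have hres : sk2 - ((k+2 : ℕ) : R) * P
          = algebraMap ℝ R (((2*(k+1) : ℕ) : ℝ)⁻¹) * (S1 + (S2 + S2)) := by
        rw [key, ← mul_assoc]
        have hmap : ((2*(k+1) : ℕ) : R) = algebraMap ℝ R ((2*(k+1) : ℕ) : ℝ) := by
          rw [map_natCast]
        rw [hmap, ← map_mul, inv_mul_cancel₀ (by positivity), map_one, one_mul]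
      have goal_eq : (∑ i ∈ s, (x i ^ 2) ^ (k+2)) - ((k+2:ℕ) : R) * s.prod u
          = sk2 - ((k+2:ℕ) : R) * P := rfl
      show IsSumSq ((∑ i ∈ s, (x i ^ 2) ^ (k+2)) - ((k+2:ℕ) : R) * s.prod u)
      rw [goal_eq, hres]
      exact sos_smul hfin (by positivity)



theorem exists_split {ι : Type*} [DecidableEq ι] (s : Finset ι) (ν : ι → ℕ) (d : ℕ)
    (h : d ≤ ∑ i ∈ s, ν i) :
    ∃ β : ι → ℕ, (∀ i ∈ s, β i ≤ ν i) ∧ ∑ i ∈ s, β i = d := by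
  induction s using Finset.cons_induction generalizing d with
  | empty => exact ⟨fun _ => 0, by simp, by simp at h ⊢; omega⟩
  | cons i s hi ih =>
    rw [Finset.sum_cons] at h
    obtain ⟨β, hβ, hsum⟩ := ih (d - min d (ν i)) (by omega)
    refine ⟨fun j => if j = i then min d (ν i) else β j, ?_, ?_⟩
    · intro j hj
      rcases Finset.mem_cons.mp hj with rfl | hj'
      · simp [min_le_right]
      · have : j ≠ i := fun hji => hi (hji ▸ hj')
        simp [this, hβ j hj']
    · rw [Finset.sum_cons]
      have : ∀ j ∈ s, (if j = i then min d (ν i) else β j) = β j := by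
        intro j hj
        have : j ≠ i := fun hji => hi (hji ▸ hj)
        simp [this]
      rw [Finset.sum_congr rfl this, hsum]
      simp only [if_true, eq_self_iff_true]
      omega

theorem amgm_weighted {ι : Type*} [Algebra ℝ R] [DecidableEq ι] (s : Finset ι) (ν : ι → ℕ)
    (x : ι → R) :
    IsSumSq ((∑ i ∈ s, (ν i : R) * (x i ^ 2) ^ (∑ j ∈ s, ν j))
      - ((∑ j ∈ s, ν j : ℕ) : R) * ∏ i ∈ s, (x i ^ 2) ^ ν i) := by
  classical
  have h := amgm_core (R := R) (s.sigma fun i => Finset.range (ν i)) (fun p => x p.1)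
  have hcard : (s.sigma fun i => Finset.range (ν i)).card = ∑ j ∈ s, ν j := by
    rw [Finset.card_sigma]
    simp
  rw [hcard] at h
  have hsum : (∑ p ∈ s.sigma (fun i => Finset.range (ν i)), (x p.1 ^ 2) ^ (∑ j ∈ s, ν j))
      = ∑ i ∈ s, (ν i : R) * (x i ^ 2) ^ (∑ j ∈ s, ν j) := by
    rw [Finset.sum_sigma]
    refine Finset.sum_congr rfl fun i _ => ?_
    simp [Finset.sum_const, Finset.card_range, nsmul_eq_mul]
  have hprod : (∏ p ∈ s.sigma (fun i => Finset.range (ν i)), x p.1 ^ 2)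
      = ∏ i ∈ s, (x i ^ 2) ^ ν i := by
    rw [Finset.prod_sigma]
    refine Finset.prod_congr rfl fun i _ => ?_
    simp [Finset.prod_const, Finset.card_range]
  rwa [hsum, hprod] at h

theorem hurwitz_sos {ι : Type*} [Algebra ℝ R] [DecidableEq ι] (s : Finset ι) (ν : ι → ℕ)
    (d : ℕ) (hd : ∑ i ∈ s, ν i = 2 * d) (p : ι → R) :
    IsSumSq ((∑ i ∈ s, (ν i : R) * (p i) ^ (2*d)) - ((2*d : ℕ) : R) * ∏ i ∈ s, (p i) ^ (ν i)) := by
  obtain ⟨β, hβle, hβsum⟩ := exists_split s ν d (by omega)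
  set γ : ι → ℕ := fun i => ν i - β i with hγ
  have hγsum : ∑ i ∈ s, γ i = d := by
    have hsum2 : ∑ i ∈ s, (β i + γ i) = ∑ i ∈ s, ν i := Finset.sum_congr rfl (fun i hi => by
      have := hβle i hi
      simp only [hγ]
      omega)
    rw [Finset.sum_add_distrib] at hsum2
    omega
  set A : R := ∏ i ∈ s, p i ^ β i with hA
  set B : R := ∏ i ∈ s, p i ^ γ i with hB
  have W1 := amgm_weighted (R := R) s β (fun i => p i)
  have W2 := amgm_weighted (R := R) s γ (fun i => p i)
  rw [hβsum] at W1
  rw [hγsum] at W2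
  have hA2 : ∏ i ∈ s, ((p i) ^ 2) ^ β i = A ^ 2 := by
    rw [hA, ← Finset.prod_pow]
    exact Finset.prod_congr rfl fun i _ => by ring
  have hB2 : ∏ i ∈ s, ((p i) ^ 2) ^ γ i = B ^ 2 := by
    rw [hB, ← Finset.prod_pow]
    exact Finset.prod_congr rfl fun i _ => by ring
  rw [hA2] at W1
  rw [hB2] at W2
  have hsq : IsSumSq ((d : R) * (A - B) ^ 2 ) := by
    have := sos_nat_mul (sos_sq (A - B)) d
    exact this
  have key : (∑ i ∈ s, (ν i : R) * (p i) ^ (2*d)) - ((2*d : ℕ) : R) * ∏ i ∈ s, (p i) ^ (ν i)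
      = ((∑ i ∈ s, (β i : R) * ((p i ^ 2)) ^ d) - ((d : ℕ) : R) * A ^ 2)
      + (((∑ i ∈ s, (γ i : R) * ((p i ^ 2)) ^ d) - ((d : ℕ) : R) * B ^ 2))
      + (d : R) * (A - B) ^ 2 := by
    have h1 : ∀ i ∈ s, (ν i : R) * (p i) ^ (2*d)
        = (β i : R) * ((p i ^ 2)) ^ d + (γ i : R) * ((p i ^ 2)) ^ d := by
      intro i hi
      have hv : ν i = β i + γ i := by have := hβle i hi; simp [hγ]; omega
      rw [hv, ← pow_mul]
      push_cast
      ring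
    have h2 : ∏ i ∈ s, (p i) ^ (ν i) = A * B := by
      rw [hA, hB, ← Finset.prod_mul_distrib]
      refine Finset.prod_congr rfl fun i hi => ?_
      have hv : ν i = β i + γ i := by have := hβle i hi; simp [hγ]; omega
      rw [hv, pow_add]
    rw [Finset.sum_congr rfl h1, h2, Finset.sum_add_distrib]
    push_cast
    ring
  rw [key]
  exact (W1.add W2).add hsq

end Toolbox



theorem lasserre_term {n d : ℕ} (hd : 1 ≤ d) (α : Fin n →₀ ℕ) (hk : ∑ i, α i < 2*d)
    (lam : ℝ) (hlam : lam ≠ 0) (hsgn : lam < 0 ∨ ∃ i, Odd (α i))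
    (a : Fin n → ℝ) (ha : ∀ i, 0 < a i) :
    IsSumSq ((C (((2*d - ∑ i, α i : ℕ) : ℝ) *
        ((lam / ((2*d:ℕ):ℝ))^(2*d) * (∏ i, ((α i : ℕ):ℝ)^(α i)) * (∏ i, a i ^ (α i))⁻¹)
          ^ (1/((2*d - ∑ i, α i : ℕ):ℝ))))
      + (∑ i, C (a i) * (X i)^(2*d))
      + C lam * ∏ i, (X i)^(α i) : MvPolynomial (Fin n) ℝ) := by
  classical
  set k := ∑ i, α i with hkdef
  set sN := 2*d - k with hsdef
  have hs0 : sN ≠ 0 := by omega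
  have hsk : sN + k = 2*d := by omega
  have h2dne : ((2*d:ℕ):ℝ) ≠ 0 := Nat.cast_ne_zero.mpr (by omega)
  have h2dpos : (0:ℝ) < ((2*d:ℕ):ℝ) := by positivity
  set L := |lam| with hLdef
  have hL0 : 0 < L := abs_pos.mpr hlam
  obtain ⟨ε, hε1, hεlam⟩ : ∃ ε : Fin n → ℝ, (∀ i, ε i = 1 ∨ ε i = -1) ∧
      (∏ i, ε i ^ α i) * L = -lam := by
    rcases lt_or_gt_of_ne hlam with hneg | hpos
    · exact ⟨fun _ => 1, fun _ => Or.inl rfl, by simp [hLdef, abs_of_neg hneg]⟩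
    · obtain ⟨i₀, hodd⟩ := hsgn.resolve_left (not_lt.mpr hpos.le)
      refine ⟨fun j => if j = i₀ then -1 else 1, fun j => by by_cases h : j = i₀ <;> simp [h], ?_⟩
      have hprod : (∏ i, (if i = i₀ then (-1:ℝ) else 1) ^ α i) = (-1:ℝ) ^ α i₀ := by
        rw [Finset.prod_eq_single i₀]
        · simp
        · intro j _ hj; simp [hj]
        · intro h; exact absurd (Finset.mem_univ i₀) h
      rw [hprod, hodd.neg_one_pow, hLdef, abs_of_pos hpos]
      ring
  set ρ : Fin n → ℝ := fun i => (a i / (α i : ℝ)) ^ (((2*d:ℕ):ℝ))⁻¹ with hρdef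
  set G := (L / ((2*d:ℕ):ℝ)) * ∏ i, ((α i : ℝ) / a i) ^ ((α i : ℝ) / ((2*d:ℕ):ℝ)) with hGdef
  have hGpos : 0 < G := by
    apply mul_pos (div_pos hL0 h2dpos)
    apply Finset.prod_pos; intro i _
    rcases Nat.eq_zero_or_pos (α i) with h0 | hpos'
    · simp only [h0, Nat.cast_zero, zero_div, Real.rpow_zero]; exact one_pos
    · exact Real.rpow_pos_of_pos (div_pos (by exact_mod_cast hpos') (ha i)) _
  set c := G ^ ((sN:ℝ))⁻¹ with hcdef
  have hcpos : 0 < c := Real.rpow_pos_of_pos hGpos _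
  have hcs : c ^ sN = G := Real.rpow_inv_natCast_pow hGpos.le hs0
  have hρ2d : ∀ i, α i ≠ 0 → (α i : ℝ) * ρ i ^ (2*d) = a i := by
    intro i h0
    have hbase : (0:ℝ) ≤ a i / (α i:ℝ) := div_nonneg (ha i).le (Nat.cast_nonneg _)
    rw [hρdef]
    simp only
    rw [Real.rpow_inv_natCast_pow hbase (by omega)]
    rw [mul_div_cancel₀]
    exact Nat.cast_ne_zero.mpr h0
  have hρprod : ∏ i, ρ i ^ α i = ∏ i, (a i / (α i:ℝ)) ^ ((α i : ℝ) / ((2*d:ℕ):ℝ)) := by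
    refine Finset.prod_congr rfl fun i _ => ?_
    rw [hρdef]
    simp only
    rw [← Real.rpow_natCast ((a i / (α i:ℝ)) ^ (((2*d:ℕ):ℝ))⁻¹) (α i),
      ← Real.rpow_mul (div_nonneg (ha i).le (Nat.cast_nonneg _))]
    congr 1
    field_simp
  have hcross : ∀ i, ((α i : ℝ) / a i) ^ ((α i:ℝ)/((2*d:ℕ):ℝ))
      * ((a i / (α i:ℝ)) ^ ((α i : ℝ)/((2*d:ℕ):ℝ))) = 1 := by
    intro i
    rcases Nat.eq_zero_or_pos (α i) with h0 | hpos'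
    · simp [h0]
    · have hα : (0:ℝ) < (α i : ℝ) := by exact_mod_cast hpos'
      rw [← Real.mul_rpow (div_nonneg (Nat.cast_nonneg _) (ha i).le)
        (div_nonneg (ha i).le (Nat.cast_nonneg _))]
      rw [div_mul_div_comm, mul_comm ((α i:ℝ)) (a i), div_self (mul_pos (ha i) hα).ne',
        Real.one_rpow]
  have hR2 : ((2*d:ℕ):ℝ) * c ^ sN * ∏ i, ρ i ^ α i = L := by
    rw [hcs, hρprod, hGdef]
    rw [mul_assoc, mul_assoc, ← Finset.prod_mul_distrib]
    rw [Finset.prod_congr rfl (fun i _ => hcross i), Finset.prod_const_one]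
    field_simp
  have hG2d : G ^ (2*d) = (lam / ((2*d:ℕ):ℝ))^(2*d) * (∏ i, ((α i:ℕ):ℝ)^(α i))
      * (∏ i, a i ^ (α i))⁻¹ := by
    rw [hGdef, mul_pow]
    have h1 : (L / ((2*d:ℕ):ℝ))^(2*d) = (lam / ((2*d:ℕ):ℝ))^(2*d) := by
      rw [div_pow, div_pow, hLdef, (even_two_mul d).pow_abs]
    have h2 : (∏ i, ((α i:ℝ)/a i) ^ ((α i:ℝ)/((2*d:ℕ):ℝ)))^(2*d)
        = (∏ i, ((α i:ℕ):ℝ)^(α i)) * (∏ i, a i ^ (α i))⁻¹ := by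
      rw [← Finset.prod_pow]
      have hterm : ∀ i ∈ Finset.univ (α := Fin n),
          ((((α i:ℝ)/a i) ^ ((α i:ℝ)/((2*d:ℕ):ℝ)))^(2*d) : ℝ)
          = ((α i:ℕ):ℝ)^(α i) * (a i ^ (α i))⁻¹ := by
        intro i _
        rw [← Real.rpow_natCast ((((α i:ℝ)/a i)) ^ ((α i:ℝ)/((2*d:ℕ):ℝ))) (2*d),
          ← Real.rpow_mul (div_nonneg (Nat.cast_nonneg _) (ha i).le), div_mul_cancel₀ _ h2dne,
          Real.rpow_natCast, div_pow,
          div_eq_mul_inv]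
      rw [Finset.prod_congr rfl hterm, Finset.prod_mul_distrib, ← Finset.prod_inv_distrib]
    rw [h1, h2]
    ring
  have hc2d : c ^ (2*d) = ((lam / ((2*d:ℕ):ℝ))^(2*d) * (∏ i, ((α i:ℕ):ℝ)^(α i))
      * (∏ i, a i ^ (α i))⁻¹) ^ (((sN:ℝ))⁻¹) := by
    rw [← hG2d, hcdef, ← Real.rpow_natCast (G ^ (((sN:ℝ))⁻¹)) (2*d),
      ← Real.rpow_mul hGpos.le, mul_comm, Real.rpow_mul hGpos.le, Real.rpow_natCast]
  -- polynomial part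
  set μ : Fin n → ℝ := fun i => ε i * ρ i with hμdef
  have hμ2d : ∀ i, μ i ^ (2*d) = ρ i ^ (2*d) := by
    intro i
    rw [hμdef]
    simp only
    rw [mul_pow]
    rcases hε1 i with h | h
    · rw [h]; simp
    · rw [h, (even_two_mul d).neg_one_pow, one_mul]
  have hμprod : ∏ i, μ i ^ α i = (∏ i, ε i ^ α i) * ∏ i, ρ i ^ α i := by
    rw [← Finset.prod_mul_distrib]
    exact Finset.prod_congr rfl fun i _ => mul_pow _ _ _
  have hνsum : ∑ o : Option (Fin n), (Option.elim o sN (fun i => α i)) = 2*d := by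
    rw [Fintype.sum_option]
    simpa using hsk
  have H := hurwitz_sos (R := MvPolynomial (Fin n) ℝ) Finset.univ
    (fun o => Option.elim o sN (fun i => α i)) d hνsum
    (fun o => Option.elim o (C c) (fun i => C (μ i) * X i))
  rw [Fintype.sum_option, Fintype.prod_option] at H
  simp only [Option.elim_none, Option.elim_some] at H
  -- identify the three pieces
  have e1 : ((sN : ℕ) : MvPolynomial (Fin n) ℝ) * (C c)^(2*d)
      = C (((sN:ℕ):ℝ) * c^(2*d)) := by
    rw [← map_pow, ← map_natCast (C : ℝ →+* MvPolynomial (Fin n) ℝ) sN, ← map_mul]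
  have e2 : ∀ i, ((α i : ℕ) : MvPolynomial (Fin n) ℝ) * (C (μ i) * X i)^(2*d)
      = (if α i = 0 then 0 else C (a i) * (X i)^(2*d)) := by
    intro i
    by_cases h0 : α i = 0
    · simp [h0]
    · rw [if_neg h0, mul_pow, ← map_pow, ← map_natCast (C : ℝ →+* MvPolynomial (Fin n) ℝ) (α i),
        ← mul_assoc, ← map_mul]
      congr 2
      rw [hμ2d i]
      exact hρ2d i h0
  have e3 : ((2*d : ℕ) : MvPolynomial (Fin n) ℝ) * ((C c)^sN * ∏ i, (C (μ i) * X i)^(α i))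
      = C (-lam) * ∏ i, (X i)^(α i) := by
    have hp : ∏ i, (C (μ i) * X i)^(α i)
        = C (∏ i, μ i ^ α i) * ∏ i, (X i)^(α i) := by
      rw [map_prod]
      rw [← Finset.prod_mul_distrib]
      refine Finset.prod_congr rfl fun i _ => ?_
      rw [mul_pow, map_pow]
    rw [hp, ← map_pow, ← map_natCast (C : ℝ →+* MvPolynomial (Fin n) ℝ) (2*d)]
    rw [show ((C ((2*d:ℕ):ℝ)) * ((C (c^sN)) * (C (∏ i, μ i ^ α i) * ∏ i, (X i)^(α i))))
        = (C ((2*d:ℕ):ℝ) * C (c^sN) * C (∏ i, μ i ^ α i)) * ∏ i, (X i)^(α i) by ring]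
    rw [← map_mul, ← map_mul]
    congr 2
    rw [hμprod, show ((2*d:ℕ):ℝ) * c^sN * ((∏ i, ε i ^ α i) * ∏ i, ρ i ^ α i)
        = (∏ i, ε i ^ α i) * (((2*d:ℕ):ℝ) * c^sN * ∏ i, ρ i ^ α i) by ring, hR2]
    exact hεlam
  rw [Finset.sum_congr rfl (fun i _ => e2 i), e1] at H
  have hθ : C (((sN:ℕ):ℝ) * c^(2*d))
      = (C (((sN : ℕ) : ℝ) * ((lam / ((2*d:ℕ):ℝ))^(2*d) * (∏ i, ((α i : ℕ):ℝ)^(α i))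
        * (∏ i, a i ^ (α i))⁻¹) ^ (1/((sN : ℕ):ℝ))) : MvPolynomial (Fin n) ℝ) := by
    rw [hc2d, one_div]
  rw [hθ, e3] at H
  -- final assembly
  have Bsos : IsSumSq (∑ i, if α i = 0 then C (a i) * (X i)^(2*d)
      else (0 : MvPolynomial (Fin n) ℝ)) := by
    apply sos_sum
    intro i _
    by_cases h0 : α i = 0
    · rw [if_pos h0]
      have : (C (a i) * (X i)^(2*d) : MvPolynomial (Fin n) ℝ)
          = (C (Real.sqrt (a i)) * (X i)^d)^2 := by
        rw [mul_pow, ← map_pow, Real.sq_sqrt (ha i).le, ← pow_mul]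
        congr 2
        ring
      rw [this]
      exact sos_sq _
    · rw [if_neg h0]; exact IsSumSq.zero
  have split : (∑ i, C (a i) * (X i)^(2*d) : MvPolynomial (Fin n) ℝ)
      = (∑ i, if α i = 0 then 0 else C (a i) * (X i)^(2*d))
        + (∑ i, if α i = 0 then C (a i) * (X i)^(2*d) else 0) := by
    rw [← Finset.sum_add_distrib]
    refine Finset.sum_congr rfl fun i _ => ?_
    by_cases h0 : α i = 0 <;> simp [h0]
  have final_eq : (C (((sN : ℕ) : ℝ) * ((lam / ((2*d:ℕ):ℝ))^(2*d) * (∏ i, ((α i : ℕ):ℝ)^(α i))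
        * (∏ i, a i ^ (α i))⁻¹) ^ (1/((sN : ℕ):ℝ))) : MvPolynomial (Fin n) ℝ)
      + (∑ i, C (a i) * (X i)^(2*d)) + C lam * ∏ i, (X i)^(α i)
      = ((C (((sN : ℕ) : ℝ) * ((lam / ((2*d:ℕ):ℝ))^(2*d) * (∏ i, ((α i : ℕ):ℝ)^(α i))
        * (∏ i, a i ^ (α i))⁻¹) ^ (1/((sN : ℕ):ℝ))))
        + (∑ i, if α i = 0 then 0 else C (a i) * (X i)^(2*d))
        - C (-lam) * ∏ i, (X i)^(α i))
      + (∑ i, if α i = 0 then C (a i) * (X i)^(2*d) else 0) := by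
    rw [split, map_neg]
    ring
  rw [final_eq]
  exact H.add Bsos


theorem mono_sos {n : ℕ} (β : Fin n →₀ ℕ) (heven : ∀ i, Even (β i)) {co : ℝ} (hco : 0 ≤ co) :
    IsSumSq (monomial β co : MvPolynomial (Fin n) ℝ) := by
  set h : Fin n →₀ ℕ := Finsupp.mapRange (· / 2) (Nat.zero_div 2) β with hh
  have hhalf : h + h = β := by
    ext i
    obtain ⟨m, hm⟩ := heven i
    simp only [Finsupp.add_apply, hh, Finsupp.mapRange_apply, hm]
    omega
  have key : (monomial β co : MvPolynomial (Fin n) ℝ)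
      = (monomial h (Real.sqrt co))^2 := by
    rw [pow_two, monomial_mul, hhalf, Real.mul_self_sqrt hco]
  rw [key]
  exact sos_sq _

/-- Explicit lower bound `r_dmt`: let `f` be non-constant of degree `2d` with
`f_{2d,i} > 0` for all `i` and `|α| < 2d` for all `α ∈ Δ`, and let `t = |Δ|`.
Then `f − r_dmt` is a sum of squares, where
`r_dmt = f_0 − Σ_{α∈Δ}(2d−|α|)·[(f_α/2d)^{2d}·t^{|α|}·α^α·Π_i f_{2d,i}^{−α_i}]^{1/(2d−|α|)}`. -/
theorem rdmt_lower_bound {n d : ℕ} (hd : 1 ≤ d) (f : MvPolynomial (Fin n) ℝ)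
    (hdeg : f.totalDegree = 2 * d) (Δ : Finset (Fin n →₀ ℕ))
    (hΔ : ∀ α, α ∈ Δ ↔ α ∈ f.support ∧ α ≠ 0 ∧
      (¬ ∃ i, α = Finsupp.single i (2 * d)) ∧
      (f.coeff α < 0 ∨ ∃ i, Odd (α i)))
    (hpos : ∀ i, 0 < f.coeff (Finsupp.single i (2 * d)))
    (hΔdeg : ∀ α ∈ Δ, ∑ i, α i < 2 * d) :
    IsSumSq (f - C (f.coeff 0 -
      ∑ α ∈ Δ, ((2 * d - ∑ i, α i : ℕ) : ℝ) *
        ((f.coeff α / ((2 * d : ℕ) : ℝ)) ^ (2 * d) *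
          ((Δ.card : ℝ) ^ (∑ i, α i)) *
          (∏ i, ((α i : ℕ) : ℝ) ^ (α i)) *
          (∏ i, (f.coeff (Finsupp.single i (2 * d))) ^ (α i))⁻¹) ^
            (1 / ((2 * d - ∑ i, α i : ℕ) : ℝ)))) := by
  classical
  have h2d0 : 2*d ≠ 0 := by omega
  have hsing_ne : ∀ i : Fin n, Finsupp.single i (2*d) ≠ (0 : Fin n →₀ ℕ) := by
    intro i h
    rw [Finsupp.single_eq_zero] at h
    omega
  have hsing_mem : ∀ i, Finsupp.single i (2*d) ∈ f.support := fun i =>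
    mem_support_iff.mpr (hpos i).ne'
  have hsing_even : ∀ (i j : Fin n), Even ((Finsupp.single i (2*d)) j) := by
    intro i j
    rcases eq_or_ne i j with rfl | hne
    · simpa [Finsupp.single_apply] using even_two_mul d
    · simp [Finsupp.single_apply, hne]
  -- the base decomposition of f
  have hf0 : f - C (f.coeff 0) = ∑ β ∈ f.support.erase 0, monomial β (f.coeff β) := by
    by_cases h0 : (0 : Fin n →₀ ℕ) ∈ f.support
    · have hadd := Finset.add_sum_erase f.support (fun β => monomial β (f.coeff β)) h0
      calc f - C (f.coeff 0)
          = (∑ β ∈ f.support, monomial β (f.coeff β)) - monomial 0 (f.coeff 0) := by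
            rw [C_apply, f.support_sum_monomial_coeff]
        _ = ∑ β ∈ f.support.erase 0, monomial β (f.coeff β) := by rw [← hadd]; ring
    · have hc0 : f.coeff 0 = 0 := notMem_support_iff.mp h0
      rw [hc0, map_zero, sub_zero, Finset.erase_eq_of_notMem h0]
      exact f.support_sum_monomial_coeff.symm
  set Sing : Finset (Fin n →₀ ℕ) := Finset.image (fun i => Finsupp.single i (2*d)) Finset.univ
    with hSingdef
  have hSing_sub : Sing ⊆ f.support.erase 0 := by
    intro β hβ
    rw [hSingdef, Finset.mem_image] at hβ
    obtain ⟨i, _, rfl⟩ := hβ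
    exact Finset.mem_erase.mpr ⟨hsing_ne i, hsing_mem i⟩
  have hSing_sos : ∀ β ∈ Sing, IsSumSq (monomial β (f.coeff β) : MvPolynomial (Fin n) ℝ) := by
    intro β hβ
    rw [hSingdef, Finset.mem_image] at hβ
    obtain ⟨i, _, rfl⟩ := hβ
    exact mono_sos _ (hsing_even i) (hpos i).le
  have hRest_sos : ∀ β ∈ f.support.erase 0, β ∉ Δ → β ∉ Sing →
      IsSumSq (monomial β (f.coeff β) : MvPolynomial (Fin n) ℝ) := by
    intro β hβ hβΔ hβS
    obtain ⟨hβ0, hβsup⟩ := Finset.mem_erase.mp hβ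
    have hnotsing : ¬ ∃ i, β = Finsupp.single i (2*d) := by
      rintro ⟨i, rfl⟩
      exact hβS (Finset.mem_image.mpr ⟨i, Finset.mem_univ i, rfl⟩)
    have hnot : ¬ (f.coeff β < 0 ∨ ∃ i, Odd (β i)) := by
      intro hcon
      exact hβΔ ((hΔ β).mpr ⟨hβsup, hβ0, hnotsing, hcon⟩)
    push_neg at hnot
    obtain ⟨hle, hodd⟩ := hnot
    exact mono_sos _ (fun i => Nat.not_odd_iff_even.mp (hodd i)) hle
  by_cases hΔe : Δ = ∅
  · subst hΔe
    rw [Finset.sum_empty, sub_zero, hf0]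
    apply sos_sum
    intro β hβ
    by_cases hβS : β ∈ Sing
    · exact hSing_sos β hβS
    · exact hRest_sos β hβ (Finset.notMem_empty β) hβS
  · -- main case
    have ht : 0 < Δ.card := Finset.card_pos.mpr (Finset.nonempty_of_ne_empty hΔe)
    have htR : ((Δ.card : ℝ)) ≠ 0 := Nat.cast_ne_zero.mpr ht.ne'
    set F : Fin n → ℝ := fun i => f.coeff (Finsupp.single i (2*d)) with hFdef
    have hΔsub : Δ ⊆ f.support.erase 0 := by
      intro α hα
      obtain ⟨h1, h2, _, _⟩ := (hΔ α).mp hα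
      exact Finset.mem_erase.mpr ⟨h2, h1⟩
    have hdisj : Disjoint Δ Sing := by
      rw [Finset.disjoint_left]
      intro α hα hαS
      obtain ⟨_, _, h3, _⟩ := (hΔ α).mp hα
      rw [hSingdef, Finset.mem_image] at hαS
      obtain ⟨i, _, hi⟩ := hαS
      exact h3 ⟨i, hi.symm⟩
    have hUsub : Δ ∪ Sing ⊆ f.support.erase 0 := Finset.union_subset hΔsub hSing_sub
    -- the three-way split
    have hsplit : ∑ β ∈ f.support.erase 0, monomial β (f.coeff β)
        = (∑ α ∈ Δ, monomial α (f.coeff α)) + (∑ β ∈ Sing, monomial β (f.coeff β))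
          + ∑ β ∈ (f.support.erase 0) \ (Δ ∪ Sing), monomial β (f.coeff β) := by
      rw [← Finset.sum_union hdisj, ← Finset.sum_sdiff hUsub]
      ring
    -- the singles are absorbed by the Δ-sum
    have hswap : ∑ β ∈ Sing, monomial β (f.coeff β)
        = ∑ _α ∈ Δ, ∑ i, C (F i / (Δ.card : ℝ)) * (X i)^(2*d) := by
      rw [Finset.sum_const, Finset.smul_sum]
      rw [hSingdef, Finset.sum_image (fun i _ j _ h =>
        Finsupp.single_left_injective h2d0 h)]
      refine Finset.sum_congr rfl fun i _ => ?_
      rw [nsmul_eq_mul, ← mul_assoc]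
      rw [show ((Δ.card : ℕ) : MvPolynomial (Fin n) ℝ) * C (F i / (Δ.card:ℝ))
          = C ((Δ.card:ℝ) * (F i / (Δ.card:ℝ))) by
        rw [map_mul, map_natCast]]
      rw [mul_div_cancel₀ _ htR, X_pow_eq_monomial, C_mul_monomial, mul_one]
    have hmono : ∀ α ∈ Δ, (monomial α (f.coeff α) : MvPolynomial (Fin n) ℝ)
        = C (f.coeff α) * ∏ i, (X i)^(α i) := by
      intro α _
      rw [monomial_eq]
      congr 1
      exact Finsupp.prod_fintype _ _ (fun i => pow_zero _)
    -- θ-coefficient equality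
    have hθeq : ∀ α ∈ Δ,
        ((f.coeff α / ((2 * d : ℕ) : ℝ)) ^ (2 * d) * ((Δ.card : ℝ) ^ (∑ i, α i)) *
          (∏ i, ((α i : ℕ) : ℝ) ^ (α i)) *
          (∏ i, (f.coeff (Finsupp.single i (2 * d))) ^ (α i))⁻¹)
        = ((f.coeff α / ((2 * d : ℕ) : ℝ)) ^ (2 * d) * (∏ i, ((α i : ℕ) : ℝ) ^ (α i)) *
          (∏ i, (F i / (Δ.card:ℝ)) ^ (α i))⁻¹) := by
      intro α _
      have h1 : ∏ i, (F i / (Δ.card:ℝ)) ^ (α i)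
          = (∏ i, F i ^ (α i)) / (Δ.card:ℝ) ^ (∑ i, α i) := by
        rw [← Finset.prod_pow_eq_pow_sum, ← Finset.prod_div_distrib]
        exact Finset.prod_congr rfl fun i _ => div_pow _ _ _
      rw [h1, inv_div]
      simp only [hFdef]
      rw [div_eq_mul_inv]
      ring
    -- per-term SOS via lasserre_term
    have hNsos : ∀ α ∈ Δ, IsSumSq ((C (((2*d - ∑ i, α i : ℕ) : ℝ) *
        ((f.coeff α / ((2*d:ℕ):ℝ))^(2*d) * (∏ i, ((α i : ℕ):ℝ)^(α i))
          * (∏ i, (F i / (Δ.card:ℝ)) ^ (α i))⁻¹)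
          ^ (1/((2*d - ∑ i, α i : ℕ):ℝ))))
      + (∑ i, C (F i / (Δ.card:ℝ)) * (X i)^(2*d))
      + C (f.coeff α) * ∏ i, (X i)^(α i) : MvPolynomial (Fin n) ℝ) := by
      intro α hα
      obtain ⟨h1, h2, h3, h4⟩ := (hΔ α).mp hα
      exact lasserre_term hd α (hΔdeg α hα) (f.coeff α) (mem_support_iff.mp h1) h4
        (fun i => F i / (Δ.card:ℝ)) (fun i => div_pos (hpos i) (by exact_mod_cast ht))
    have hθC : ∀ α ∈ Δ, (C (((2*d - ∑ i, α i : ℕ) : ℝ) *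
        ((f.coeff α / ((2*d:ℕ):ℝ))^(2*d) * (∏ i, ((α i : ℕ):ℝ)^(α i))
          * (∏ i, (F i / (Δ.card:ℝ)) ^ (α i))⁻¹)
          ^ (1/((2*d - ∑ i, α i : ℕ):ℝ))) : MvPolynomial (Fin n) ℝ)
        = C (((2 * d - ∑ i, α i : ℕ) : ℝ) *
        ((f.coeff α / ((2 * d : ℕ) : ℝ)) ^ (2 * d) *
          ((Δ.card : ℝ) ^ (∑ i, α i)) *
          (∏ i, ((α i : ℕ) : ℝ) ^ (α i)) *
          (∏ i, (f.coeff (Finsupp.single i (2 * d))) ^ (α i))⁻¹) ^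
            (1 / ((2 * d - ∑ i, α i : ℕ) : ℝ))) := by
      intro α hα
      rw [hθeq α hα]
    have key : f - C (f.coeff 0 -
        ∑ α ∈ Δ, ((2 * d - ∑ i, α i : ℕ) : ℝ) *
          ((f.coeff α / ((2 * d : ℕ) : ℝ)) ^ (2 * d) *
            ((Δ.card : ℝ) ^ (∑ i, α i)) *
            (∏ i, ((α i : ℕ) : ℝ) ^ (α i)) *
            (∏ i, (f.coeff (Finsupp.single i (2 * d))) ^ (α i))⁻¹) ^
              (1 / ((2 * d - ∑ i, α i : ℕ) : ℝ)))
        = (∑ α ∈ Δ, ((C (((2*d - ∑ i, α i : ℕ) : ℝ) *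
            ((f.coeff α / ((2*d:ℕ):ℝ))^(2*d) * (∏ i, ((α i : ℕ):ℝ)^(α i))
              * (∏ i, (F i / (Δ.card:ℝ)) ^ (α i))⁻¹)
              ^ (1/((2*d - ∑ i, α i : ℕ):ℝ))))
          + (∑ i, C (F i / (Δ.card:ℝ)) * (X i)^(2*d))
          + C (f.coeff α) * ∏ i, (X i)^(α i)))
          + ∑ β ∈ (f.support.erase 0) \ (Δ ∪ Sing), monomial β (f.coeff β) := by
      have hstep : f - C (f.coeff 0 -
          ∑ α ∈ Δ, ((2 * d - ∑ i, α i : ℕ) : ℝ) *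
            ((f.coeff α / ((2 * d : ℕ) : ℝ)) ^ (2 * d) *
              ((Δ.card : ℝ) ^ (∑ i, α i)) *
              (∏ i, ((α i : ℕ) : ℝ) ^ (α i)) *
              (∏ i, (f.coeff (Finsupp.single i (2 * d))) ^ (α i))⁻¹) ^
                (1 / ((2 * d - ∑ i, α i : ℕ) : ℝ)))
          = (f - C (f.coeff 0)) + ∑ α ∈ Δ, (C (((2 * d - ∑ i, α i : ℕ) : ℝ) *
            ((f.coeff α / ((2 * d : ℕ) : ℝ)) ^ (2 * d) *
              ((Δ.card : ℝ) ^ (∑ i, α i)) *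
              (∏ i, ((α i : ℕ) : ℝ) ^ (α i)) *
              (∏ i, (f.coeff (Finsupp.single i (2 * d))) ^ (α i))⁻¹) ^
                (1 / ((2 * d - ∑ i, α i : ℕ) : ℝ))) : MvPolynomial (Fin n) ℝ) := by
        rw [map_sub, map_sum]
        ring
      rw [hstep, hf0, hsplit, hswap]
      rw [Finset.sum_add_distrib, Finset.sum_add_distrib]
      rw [Finset.sum_congr rfl hθC, Finset.sum_congr rfl hmono]
      ring
    rw [key]
    refine IsSumSq.add (sos_sum _ _ hNsos) (sos_sum _ _ ?_)
    intro β hβ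
    obtain ⟨hβin, hβnot⟩ := Finset.mem_sdiff.mp hβ
    rw [Finset.mem_union] at hβnot
    push_neg at hβnot
    exact hRest_sos β hβin hβnot.1 hβnot.2
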